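/- arXiv:2103.11336 — 6 statements merged into one kernel-verified Lean document; each statement's English description precedes it below -/
import Mathlib

section
/- Let G be a compact Hausdorff topological group. If the FC-center FC(G) has infinite index in G, then cp(G) = 0. -/
open MeasureTheory Subgroup
open scoped commutatorElement

/-- The FC-center of a group: the subgroup of elements whose conjugacy class is finite. -/
def fcCenter (G : Type*) [Group G] : Subgroup G where
  carrier := {x : G | {y : G | ∃ g : G, g * x * g⁻¹ = y}.Finite}
  one_mem' := Set.Finite.subset (Set.finite_singleton 1) (by rintro y ⟨g, rfl⟩; simp)
  mul_mem' := by
    intro a b ha hb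
    apply (ha.image2 (· * ·) hb).subset
    rintro y ⟨g, rfl⟩
    exact ⟨_, ⟨g, rfl⟩, _, ⟨g, rfl⟩, by group⟩
  inv_mem' := by
    intro a ha
    apply (ha.image (·⁻¹)).subset
    rintro y ⟨g, rfl⟩
    exact ⟨g * a * g⁻¹, ⟨g, rfl⟩, by group⟩

theorem commutator_mem_commutator' {G : Type*} [Group G] (x y : G) :
    ⁅x, y⁆ ∈ commutator G :=
  Subgroup.commutator_mem_commutator (Subgroup.mem_top x) (Subgroup.mem_top y)

/-- Two groups are isoclinic if there are compatible isomorphisms between their central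
quotients and their derived subgroups. -/
def Isoclinic (H K : Type*) [Group H] [Group K] : Prop :=
  ∃ (α : (H ⧸ Subgroup.center H) ≃* (K ⧸ Subgroup.center K))
    (β : ↥(commutator H) ≃* ↥(commutator K)),
    ∀ (x y : H) (x' y' : K),
      (x' : K ⧸ Subgroup.center K) = α (x : H ⧸ Subgroup.center H) →
      (y' : K ⧸ Subgroup.center K) = α (y : H ⧸ Subgroup.center H) →
      (⟨⁅x', y'⁆, commutator_mem_commutator' x' y'⟩ : ↥(commutator K)) =
        β ⟨⁅x, y⁆, commutator_mem_commutator' x y⟩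

open scoped ENNReal

section Aux
variable {G : Type*} [Group G] [TopologicalSpace G] [IsTopologicalGroup G] [CompactSpace G]
    [T2Space G] [MeasurableSpace G] [BorelSpace G]

/-- If a subgroup contains a measurable set of positive Haar measure, it has finite index. -/
lemma aux_finiteIndex_of_pos
    (μ : Measure G) [μ.IsHaarMeasure] [μ.Regular] [IsProbabilityMeasure μ]
    (H : Subgroup G) (A : Set G) (hA : A ⊆ (H : Set G))
    (hm : MeasurableSet A) (hpos : 0 < μ A) :
    H.FiniteIndex := by
  have hnh : (H : Set G) ∈ nhds (1 : G) := by
    refine Filter.mem_of_superset (Measure.div_mem_nhds_one_of_haar_pos μ A hm hpos) ?_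
    rintro y ⟨a, ha, b, hb, rfl⟩
    exact div_mem (hA ha) (hA hb)
  have hopen := Subgroup.isOpen_of_mem_nhds H hnh
  have := Subgroup.quotient_finite_of_isOpen H hopen
  exact Subgroup.finiteIndex_of_finite_quotient (H := H)

end Aux

lemma aux_conjClass_finite {G : Type*} [Group G] (x : G)
    (hfi : (Subgroup.centralizer {x}).FiniteIndex) :
    {y : G | ∃ g : G, g * x * g⁻¹ = y}.Finite := by
  have : Finite (G ⧸ Subgroup.centralizer {x}) := inferInstance
  have key : ∀ g₁ g₂ : G,
      (g₁ : G ⧸ Subgroup.centralizer {x}) = (g₂ : G ⧸ Subgroup.centralizer {x}) →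
      g₁ * x * g₁⁻¹ = g₂ * x * g₂⁻¹ := by
    intro g₁ g₂ h1
    rw [QuotientGroup.eq] at h1
    have hc := (Subgroup.mem_centralizer_singleton_iff).1 h1
    have hxc : x * (g₁⁻¹ * g₂) = (g₁⁻¹ * g₂) * x := hc.symm
    calc g₁ * x * g₁⁻¹ = g₂ * ((g₁⁻¹*g₂)⁻¹ * x * (g₁⁻¹*g₂)) * g₂⁻¹ := by group
    _ = g₂ * ((g₁⁻¹*g₂)⁻¹ * ((g₁⁻¹*g₂) * x)) * g₂⁻¹ := by rw [← hxc]; group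
    _ = g₂ * x * g₂⁻¹ := by group
  let f : G ⧸ Subgroup.centralizer {x} → G :=
    fun q => Quotient.liftOn' q (fun g => g * x * g⁻¹)
      (fun g₁ g₂ hgg => key g₁ g₂ (Quotient.sound' hgg))
  apply (Set.finite_range f).subset
  rintro y ⟨g, rfl⟩
  exact ⟨(g : G ⧸ Subgroup.centralizer {x}), rfl⟩

section Main
variable {G : Type*} [Group G] [TopologicalSpace G] [IsTopologicalGroup G] [CompactSpace G]
    [T2Space G] [MeasurableSpace G] [BorelSpace G]

/-- The centralizer slice as a set. -/
lemma aux_cset_eq (x : G) : {y : G | x * y = y * x} = (Subgroup.centralizer {x} : Set G) := by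
  ext y
  simp only [Set.mem_setOf_eq, SetLike.mem_coe, Subgroup.mem_centralizer_singleton_iff]
  exact eq_comm

lemma aux_cset_closed (x : G) : IsClosed {y : G | x * y = y * x} :=
  isClosed_eq (continuous_const.mul continuous_id) (continuous_id.mul continuous_const)

/-- Upper semicontinuity input: if the centralizer of `x` is inside an open `U`, then the same
holds for all `x'` in a neighborhood of `x`. -/
lemma aux_nbhd (x : G) (U : Set G) (hU : IsOpen U) (hCU : {y : G | x * y = y * x} ⊆ U) :
    ∃ V : Set G, IsOpen V ∧ x ∈ V ∧ ∀ x' ∈ V, {y : G | x' * y = y * x'} ⊆ U := by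
  have hScl : IsClosed {p : G × G | p.1 * p.2 = p.2 * p.1} :=
    isClosed_eq (continuous_fst.mul continuous_snd) (continuous_snd.mul continuous_fst)
  set Bad : Set G :=
    Prod.fst '' ({p : G × G | p.1 * p.2 = p.2 * p.1} ∩ (Set.univ ×ˢ Uᶜ)) with hBad
  have hcpt : IsCompact ({p : G × G | p.1 * p.2 = p.2 * p.1} ∩ (Set.univ ×ˢ Uᶜ)) :=
    (hScl.inter (isClosed_univ.prod hU.isClosed_compl)).isCompact
  have hBadC : IsClosed Bad := (hcpt.image continuous_fst).isClosed
  refine ⟨Badᶜ, hBadC.isOpen_compl, ?_, ?_⟩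
  · intro hx
    obtain ⟨⟨a, b⟩, ⟨hab, -, hbU⟩, rfl⟩ := hx
    exact hbU (hCU hab)
  · intro x' hx' y hy
    by_contra hyU
    exact hx' ⟨(x', y), ⟨hy, Set.mem_univ _, hyU⟩, rfl⟩

variable (μ : Measure G) [μ.IsHaarMeasure] [μ.Regular] [IsProbabilityMeasure μ]

lemma aux_usc (t : ℝ≥0∞) : IsOpen {x : G | μ {y : G | x * y = y * x} < t} := by
  rw [isOpen_iff_forall_mem_open]
  intro x hx
  obtain ⟨U, hCU, hUo, hUlt⟩ := Set.exists_isOpen_lt_of_lt {y : G | x * y = y * x} t hx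
  obtain ⟨V, hVo, hxV, hV⟩ := aux_nbhd x U hUo hCU
  exact ⟨V, fun x' hx' => lt_of_le_of_lt (measure_mono (hV x' hx')) hUlt, hVo, hxV⟩

end Main


set_option maxHeartbeats 1000000 in
theorem cp_eq_zero_of_not_finiteIndex_fcCenter'
    {G : Type*} [Group G] [TopologicalSpace G] [IsTopologicalGroup G] [CompactSpace G]
    [T2Space G] [MeasurableSpace G] [BorelSpace G]
    (μ : Measure G) [μ.IsHaarMeasure] [μ.Regular] [IsProbabilityMeasure μ]
    (H : Subgroup G)
    (hmem : ∀ x : G, {y : G | ∃ g : G, g * x * g⁻¹ = y}.Finite → x ∈ H)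
    (h : ¬ H.FiniteIndex) :
    (μ.prod μ) {p : G × G | p.1 * p.2 = p.2 * p.1} = 0 := by
  classical
  set c : G → ℝ≥0∞ := fun x => μ {y : G | x * y = y * x} with hc
  set A : Set G := ⋃ n : ℕ, {x : G | (n : ℝ≥0∞)⁻¹ ≤ c x} with hA
  have hAm : MeasurableSet A := by
    refine MeasurableSet.iUnion fun n => ?_
    have : {x : G | (n : ℝ≥0∞)⁻¹ ≤ c x} = {x : G | c x < (n : ℝ≥0∞)⁻¹}ᶜ := by
      ext x; simp [not_lt]
    rw [this]
    exact (aux_usc μ _).measurableSet.compl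
  -- every element of A is in H
  have hsub : A ⊆ (H : Set G) := by
    intro x hx
    obtain ⟨n, hn⟩ := Set.mem_iUnion.1 hx
    have hcne : c x ≠ 0 := by
      intro h0
      rw [Set.mem_setOf_eq, h0, le_zero_iff, ENNReal.inv_eq_zero] at hn
      exact ENNReal.natCast_ne_top n hn
    have hfi : (Subgroup.centralizer {x}).FiniteIndex :=
      aux_finiteIndex_of_pos μ (Subgroup.centralizer {x}) {y : G | x * y = y * x}
        (by rw [aux_cset_eq]) (aux_cset_closed x).measurableSet (pos_iff_ne_zero.2 hcne)
    exact hmem x (aux_conjClass_finite x hfi)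
  have hA0 : μ A = 0 := by
    by_contra h0
    exact h (aux_finiteIndex_of_pos μ H A hsub hAm (pos_iff_ne_zero.2 h0))
  have hc0 : ∀ x : G, x ∉ A → c x = 0 := by
    intro x hx
    by_contra hne
    obtain ⟨n, hn⟩ := ENNReal.exists_inv_nat_lt hne
    exact hx (Set.mem_iUnion.2 ⟨n, le_of_lt hn⟩)
  -- now the epsilon argument
  refine le_antisymm ?_ (zero_le (a := _))
  refine ENNReal.le_of_forall_pos_le_add fun ε hε _ => ?_
  rw [zero_add]
  set ε' : ℝ≥0∞ := (ε : ℝ≥0∞) / 2 with hε'def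
  have hε' : 0 < ε' := by
    apply ENNReal.div_pos (by exact_mod_cast hε.ne') (by norm_num)
  obtain ⟨W, hAW, hWo, hWlt⟩ := Set.exists_isOpen_lt_of_lt A ε' (by rw [hA0]; exact hε')
  have hchoice : ∀ x : G, ∃ VU : Set G × Set G,
      IsOpen VU.1 ∧ x ∈ VU.1 ∧ MeasurableSet VU.2 ∧
      (VU.1 ⊆ W ∨ (μ VU.2 < ε' ∧ ∀ x' ∈ VU.1, {y : G | x' * y = y * x'} ⊆ VU.2)) := by
    intro x
    by_cases hxA : x ∈ A
    · exact ⟨(W, ∅), hWo, hAW hxA, MeasurableSet.empty, Or.inl subset_rfl⟩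
    · have h0 : μ {y : G | x * y = y * x} = 0 := hc0 x hxA
      obtain ⟨U, hCU, hUo, hUlt⟩ :=
        Set.exists_isOpen_lt_of_lt (μ := μ) {y : G | x * y = y * x} ε' (by rw [h0]; exact hε')
      obtain ⟨V, hVo, hxV, hV⟩ := aux_nbhd x U hUo hCU
      exact ⟨(V, U), hVo, hxV, hUo.measurableSet, Or.inr ⟨hUlt, hV⟩⟩
  choose VU hVo hxV hUm halt using hchoice
  obtain ⟨s, hs⟩ := isCompact_univ.elim_finite_subcover (fun x => (VU x).1)
    (fun x => hVo x) (fun x _ => Set.mem_iUnion.2 ⟨x, hxV x⟩)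
  set l := s.toList with hl
  set F : ℕ → Set G := fun n => if h : n < l.length then (VU (l.get ⟨n, h⟩)).1 else ∅ with hF
  set T : ℕ → Set G := fun n =>
    if h : n < l.length then
      (if (VU (l.get ⟨n, h⟩)).1 ⊆ W then ∅ else (VU (l.get ⟨n, h⟩)).2) else ∅ with hT
  have hFm : ∀ n, MeasurableSet (F n) := by
    intro n
    simp only [hF]
    split
    · exact (hVo _).measurableSet
    · exact MeasurableSet.empty
  have hTm : ∀ n, MeasurableSet (T n) := by
    intro n
    simp only [hT]
    split
    · split
      · exact MeasurableSet.empty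
      · exact hUm _
    · exact MeasurableSet.empty
  have hTε : ∀ n, μ (T n) ≤ ε' := by
    intro n
    simp only [hT]
    split
    · split
      · simp
      · rcases halt _ with hl' | hr
        · tauto
        · exact le_of_lt hr.1
    · simp
  set D : ℕ → Set G := disjointed F with hD
  have hDm : ∀ n, MeasurableSet (D n) := MeasurableSet.disjointed hFm
  set R : Set (G × G) := (W ×ˢ (Set.univ : Set G)) ∪ ⋃ n, (D n) ×ˢ (T n) with hR
  have hSR : {p : G × G | p.1 * p.2 = p.2 * p.1} ⊆ R := by
    rintro ⟨x, y⟩ hxy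
    have hxy' : x * y = y * x := hxy
    have hxD : x ∈ ⋃ n, D n := by
      rw [hD, iUnion_disjointed]
      obtain ⟨z, hzs, hxz⟩ := Set.mem_iUnion₂.1 (hs (Set.mem_univ x))
      obtain ⟨n, hn⟩ := List.mem_iff_get.1 (Finset.mem_toList.mpr hzs)
      refine Set.mem_iUnion.2 ⟨(n : ℕ), ?_⟩
      rw [hF]
      simp only
      rw [dif_pos n.isLt]
      have : l.get ⟨(n : ℕ), n.isLt⟩ = z := hn
      rw [this]
      exact hxz
    obtain ⟨n, hxDn⟩ := Set.mem_iUnion.1 hxD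
    have hxFn : x ∈ F n := disjointed_subset F n hxDn
    have hn : n < l.length := by
      by_contra hnl
      rw [hF] at hxFn
      simp only [dif_neg hnl] at hxFn
      exact hxFn
    set z := l.get ⟨n, hn⟩ with hz
    have hxV' : x ∈ (VU z).1 := by
      rw [hF] at hxFn
      simpa only [dif_pos hn] using hxFn
    by_cases hzW : (VU z).1 ⊆ W
    · exact Or.inl ⟨hzW hxV', Set.mem_univ _⟩
    · refine Or.inr (Set.mem_iUnion.2 ⟨n, hxDn, ?_⟩)
      rw [hT]
      simp only
      rw [dif_pos hn, if_neg hzW]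
      rcases halt z with hl' | hr
      · exact absurd hl' hzW
      · exact hr.2 x hxV' hxy'
  calc (μ.prod μ) {p : G × G | p.1 * p.2 = p.2 * p.1}
      ≤ (μ.prod μ) R := measure_mono hSR
    _ ≤ (μ.prod μ) (W ×ˢ (Set.univ : Set G)) + (μ.prod μ) (⋃ n, (D n) ×ˢ (T n)) :=
        measure_union_le _ _
    _ ≤ (μ.prod μ) (W ×ˢ (Set.univ : Set G)) + ∑' n, (μ.prod μ) ((D n) ×ˢ (T n)) :=
        add_le_add le_rfl (measure_iUnion_le _)
    _ = μ W + ∑' n, μ (D n) * μ (T n) := by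
        rw [Measure.prod_prod, measure_univ, mul_one]
        congr 1
        exact tsum_congr fun n => Measure.prod_prod _ _
    _ ≤ ε' + ∑' n, μ (D n) * ε' :=
        add_le_add (le_of_lt hWlt)
          (ENNReal.tsum_le_tsum fun n => mul_le_mul' le_rfl (hTε n))
    _ = ε' + (∑' n, μ (D n)) * ε' := by rw [ENNReal.tsum_mul_right]
    _ ≤ ε' + 1 * ε' := by
        gcongr
        rw [← measure_iUnion (disjoint_disjointed F) hDm]
        exact prob_le_one
    _ = ε := by rw [one_mul, ENNReal.add_halves]


/-- If the FC-center of a compact Hausdorff group has infinite index,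
then the commuting probability is zero. -/
theorem cp_eq_zero_of_not_finiteIndex_fcCenter
    {G : Type*} [Group G] [TopologicalSpace G] [IsTopologicalGroup G] [CompactSpace G]
    [T2Space G] [MeasurableSpace G] [BorelSpace G]
    (μ : Measure G) [μ.IsHaarMeasure] [μ.Regular] [IsProbabilityMeasure μ]
    (h : ¬ (fcCenter G).FiniteIndex) :
    (μ.prod μ) {p : G × G | p.1 * p.2 = p.2 * p.1} = 0 :=
  cp_eq_zero_of_not_finiteIndex_fcCenter' μ (fcCenter G) (fun _ hf => hf) h
end

section
/- Let G be a compact Hausdorff topological group whose center Z(G) has finite index n in G. Then cp(G) = N / n², where N is the number of pairs of cosets (aZ(G), bZ(G)) ∈ G/Z(G) × G/Z(G) such that ab = ba (this condition is independent of the choice of coset representatives a and b). -/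
open MeasureTheory Subgroup
open scoped commutatorElement

open scoped ENNReal

private lemma commute_mul_center' {G : Type*} [Group G] {z w : G}
    (hz : z ∈ Subgroup.center G) (hw : w ∈ Subgroup.center G) (x y : G) :
    Commute (x * z) (y * w) ↔ Commute x y := by
  rw [Subgroup.mem_center_iff] at hz hw
  have hzc : ∀ g : G, Commute g z := fun g => hz g
  have hwc : ∀ g : G, Commute g w := fun g => hw g
  constructor
  · intro hc
    have h1 : Commute (x * z) y := by
      have := hc.mul_right (hwc (x * z)).inv_right
      simpa using this
    have h2 := h1.mul_left (hzc y).symm.inv_left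
    simpa using h2
  · intro hc
    exact (hc.mul_right (hwc x)).mul_left (hzc (y * w)).symm

private lemma commute_out_iff' {G : Type*} [Group G] (x y : G) :
    Commute (Quotient.out (QuotientGroup.mk x : G ⧸ Subgroup.center G))
      (Quotient.out (QuotientGroup.mk y : G ⧸ Subgroup.center G)) ↔ Commute x y := by
  obtain ⟨z, hz⟩ := QuotientGroup.mk_out_eq_mul (Subgroup.center G) x
  obtain ⟨w, hw⟩ := QuotientGroup.mk_out_eq_mul (Subgroup.center G) y
  rw [hz, hw]
  exact commute_mul_center' z.2 w.2 x y

/-- If the center has finite index `n`, then `cp G = N / n²` where `N`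
is the number of pairs of cosets of the center whose representatives commute. -/
theorem cp_eq_card_commuting_coset_pairs_div_sq
    {G : Type*} [Group G] [TopologicalSpace G] [IsTopologicalGroup G] [CompactSpace G]
    [T2Space G] [MeasurableSpace G] [BorelSpace G]
    (μ : Measure G) [μ.IsHaarMeasure] [μ.Regular] [IsProbabilityMeasure μ]
    (n : ℕ) (hn : n ≠ 0) (h : (Subgroup.center G).index = n) :
    ((μ.prod μ) {p : G × G | p.1 * p.2 = p.2 * p.1}).toReal
      = (Nat.card {p : (G ⧸ Subgroup.center G) × (G ⧸ Subgroup.center G) //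
            Commute (Quotient.out p.1) (Quotient.out p.2)} : ℝ) / (n : ℝ) ^ 2 := by
  classical
  have hcard : Nat.card (G ⧸ Subgroup.center G) = n := h
  haveI hfinQ : Finite (G ⧸ Subgroup.center G) :=
    Nat.finite_of_card_ne_zero (hcard ▸ hn)
  haveI : Fintype (G ⧸ Subgroup.center G) := Fintype.ofFinite _
  set C : (G ⧸ Subgroup.center G) → Set G := fun q => QuotientGroup.mk ⁻¹' {q} with hCdef
  have hZclosed : IsClosed ((Subgroup.center G : Set G)) := by
    have : (Subgroup.center G : Set G) = ⋂ g : G, {x : G | g * x = x * g} := by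
      ext x; simp [Subgroup.mem_center_iff, Set.mem_iInter]
    rw [this]
    exact isClosed_iInter fun g => isClosed_eq (by continuity) (by continuity)
  have hCrepr : ∀ q : G ⧸ Subgroup.center G,
      C q = (fun x => (Quotient.out q)⁻¹ * x) ⁻¹' (Subgroup.center G : Set G) := by
    intro q
    ext x
    simp only [hCdef, Set.mem_preimage, Set.mem_singleton_iff, SetLike.mem_coe]
    conv_lhs => rw [← QuotientGroup.out_eq' q]
    rw [eq_comm, QuotientGroup.eq]
  have hCmeas : ∀ q, MeasurableSet (C q) := by
    intro q
    rw [hCrepr q]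
    exact hZclosed.measurableSet.preimage (measurable_const_mul _)
  have hCmu : ∀ q, μ (C q) = μ (Subgroup.center G : Set G) := by
    intro q
    rw [hCrepr q]
    exact measure_preimage_mul μ _ _
  have hn' : (n : ℝ≥0∞) ≠ 0 := by exact_mod_cast hn
  have hn'' : (n : ℝ≥0∞) ≠ ⊤ := ENNReal.natCast_ne_top n
  have hZmu : μ (Subgroup.center G : Set G) = (n : ℝ≥0∞)⁻¹ := by
    have hdisj : Pairwise (Function.onFun Disjoint C) := by
      intro a b hab
      rw [Function.onFun, Set.disjoint_left]
      intro x hx hx'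
      simp only [hCdef, Set.mem_preimage, Set.mem_singleton_iff] at hx hx'
      exact hab (hx ▸ hx')
    have hunion : ⋃ q, C q = Set.univ := by
      ext x; simp only [Set.mem_iUnion, Set.mem_univ, iff_true]
      exact ⟨QuotientGroup.mk x, rfl⟩
    have hsum : ∑' q, μ (C q) = 1 := by
      rw [← measure_iUnion hdisj hCmeas, hunion, measure_univ]
    rw [tsum_fintype] at hsum
    simp only [hCmu] at hsum
    rw [Finset.sum_const, Finset.card_univ, ← Nat.card_eq_fintype_card, hcard,
      nsmul_eq_mul] at hsum
    have := congrArg ((n : ℝ≥0∞)⁻¹ * ·) hsum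
    simpa [← mul_assoc, ENNReal.inv_mul_cancel hn' hn''] using this
  set T : Finset ((G ⧸ Subgroup.center G) × (G ⧸ Subgroup.center G)) :=
    Finset.univ.filter (fun q => Commute (Quotient.out q.1) (Quotient.out q.2)) with hTdef
  have hS : {p : G × G | p.1 * p.2 = p.2 * p.1} = ⋃ q ∈ T, C q.1 ×ˢ C q.2 := by
    ext ⟨x, y⟩
    simp only [Set.mem_setOf_eq, Set.mem_iUnion, hTdef, Finset.mem_filter, Finset.mem_univ,
      true_and, Set.mem_prod, hCdef, Set.mem_preimage, Set.mem_singleton_iff]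
    constructor
    · intro hxy
      exact ⟨(QuotientGroup.mk x, QuotientGroup.mk y),
        (commute_out_iff' x y).mpr hxy, rfl, rfl⟩
    · rintro ⟨q, hq, hx, hy⟩
      rw [← hx, ← hy] at hq
      exact (commute_out_iff' x y).mp hq
  have hdisjT : Set.Pairwise (↑T) (Function.onFun Disjoint fun q : (G ⧸ Subgroup.center G) × (G ⧸ Subgroup.center G) => C q.1 ×ˢ C q.2) := by
    intro a _ b _ hab
    rw [Function.onFun, Set.disjoint_left]
    rintro ⟨x, y⟩ ⟨hx1, hy1⟩ ⟨hx2, hy2⟩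
    simp only [hCdef, Set.mem_preimage, Set.mem_singleton_iff] at hx1 hy1 hx2 hy2
    exact hab (Prod.ext (hx1 ▸ hx2) (hy1 ▸ hy2))
  have hmeasT : ∀ q ∈ T, MeasurableSet (C q.1 ×ˢ C q.2) :=
    fun q _ => (hCmeas q.1).prod (hCmeas q.2)
  have hNcard : (Nat.card {p : (G ⧸ Subgroup.center G) × (G ⧸ Subgroup.center G) //
      Commute (Quotient.out p.1) (Quotient.out p.2)}) = T.card := by
    rw [Nat.card_eq_fintype_card, hTdef]
    exact Fintype.card_subtype _
  rw [hS, measure_biUnion_finset hdisjT hmeasT]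
  have hterm : ∀ q ∈ T, (μ.prod μ) (C q.1 ×ˢ C q.2) = (n : ℝ≥0∞)⁻¹ * (n : ℝ≥0∞)⁻¹ := by
    intro q _
    rw [Measure.prod_prod, hCmu, hCmu, hZmu]
  rw [Finset.sum_congr rfl hterm, Finset.sum_const, nsmul_eq_mul]
  rw [hNcard]
  simp only [ENNReal.toReal_mul, ENNReal.toReal_inv, ENNReal.toReal_natCast]
  ring
end

section
/- Let F be a compact Hausdorff topological group whose center Z(F) has finite index, and let H be a finite group. If F and H are isoclinic, then cp(F) = cp(H), where cp(H) = |{(x,y) ∈ H × H : xy = yx}| / |H|². -/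
open MeasureTheory Subgroup
open scoped ENNReal
open scoped commutatorElement

section Helpers

variable {G : Type*} [Group G]

lemma commute_of_center_coset {x y x₁ y₁ : G}
    (hx : (x₁ : G ⧸ center G) = (x : G ⧸ center G))
    (hy : (y₁ : G ⧸ center G) = (y : G ⧸ center G))
    (h : Commute x₁ y₁) : Commute x y := by
  rw [QuotientGroup.eq] at hx hy
  have hz : ∀ g : G, Commute (x₁⁻¹ * x) g := fun g =>
    ((Subgroup.mem_center_iff.mp hx) g).symm
  have hw : ∀ g : G, Commute (y₁⁻¹ * y) g := fun g =>
    ((Subgroup.mem_center_iff.mp hy) g).symm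
  have hx' : x = x₁ * (x₁⁻¹ * x) := by group
  have hy' : y = y₁ * (y₁⁻¹ * y) := by group
  rw [hx', hy']
  exact Commute.mul_left (h.mul_right (hw x₁).symm) (hz (y₁ * (y₁⁻¹ * y)))

/-- commuting cosets -/
def QC (G : Type*) [Group G] : Set ((G ⧸ center G) × (G ⧸ center G)) :=
  {p | ∃ x y : G, (x : G ⧸ center G) = p.1 ∧ (y : G ⧸ center G) = p.2 ∧ x * y = y * x}

lemma mem_QC_iff (x y : G) :
    ((x : G ⧸ center G), (y : G ⧸ center G)) ∈ QC G ↔ x * y = y * x := by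
  constructor
  · rintro ⟨x₁, y₁, hx, hy, hc⟩
    exact commute_of_center_coset hx hy hc
  · intro h
    exact ⟨x, y, rfl, rfl, h⟩

lemma fiber_eq (q : G ⧸ center G) :
    ∃ g : G, ((QuotientGroup.mk : G → G ⧸ center G) ⁻¹' {q}) =
      (fun y => g * y) ⁻¹' (center G : Set G) := by
  obtain ⟨x₀, rfl⟩ := QuotientGroup.mk_surjective q
  refine ⟨x₀⁻¹, ?_⟩
  ext y
  simp only [Set.mem_preimage, Set.mem_singleton_iff, SetLike.mem_coe]
  rw [QuotientGroup.eq]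
  constructor
  · intro h; simpa [mul_inv_rev] using inv_mem h
  · intro h; simpa [mul_inv_rev] using inv_mem h

lemma card_fiber [Finite G] (q : G ⧸ center G) :
    Nat.card ((QuotientGroup.mk : G → G ⧸ center G) ⁻¹' {q} : Set G) =
      Nat.card (center G) := by
  rw [Nat.card_congr (QuotientGroup.preimageMkEquivSubgroupProdSet (center G) {q})]
  simp [Nat.card_prod]

/-- counting commuting pairs in a finite group via the central quotient -/
lemma card_commuting_eq (G : Type*) [Group G] [Finite G] :
    Nat.card {p : G × G // Commute p.1 p.2} =
      Nat.card (QC G) * Nat.card (center G) ^ 2 := by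
  classical
  haveI := Fintype.ofFinite G
  haveI : Fintype (G ⧸ center G) := Fintype.ofFinite _
  have h1 : Nat.card {p : G × G // Commute p.1 p.2} =
      Nat.card ({p : G × G | p.1 * p.2 = p.2 * p.1} : Set (G × G)) :=
    Nat.card_congr (Equiv.subtypeEquivRight fun p => Iff.rfl)
  rw [h1]
  set S : Set (G × G) := {p : G × G | p.1 * p.2 = p.2 * p.1} with hS
  set f : G × G → (G ⧸ center G) × (G ⧸ center G) :=
    fun p => ((p.1 : G ⧸ center G), (p.2 : G ⧸ center G)) with hf
  rw [Nat.card_coe_set_eq, Set.ncard_eq_toFinset_card' S,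
    Nat.card_coe_set_eq, Set.ncard_eq_toFinset_card' (QC G)]
  rw [Finset.card_eq_sum_card_fiberwise
    (f := f) (t := (QC G).toFinset) ?hmem]
  case hmem =>
    intro p hp
    simp only [Finset.mem_coe, Set.mem_toFinset] at hp ⊢
    exact ⟨p.1, p.2, rfl, rfl, hp⟩
  have hfib : ∀ b ∈ (QC G).toFinset,
      (S.toFinset.filter fun a => f a = b).card = Nat.card (center G) ^ 2 := by
    intro b hb
    simp only [Set.mem_toFinset] at hb
    have hfilter : (S.toFinset.filter fun a => f a = b) = (f ⁻¹' {b}).toFinset := by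
      ext a
      simp only [Finset.mem_filter, Set.mem_toFinset, Set.mem_preimage,
        Set.mem_singleton_iff]
      constructor
      · rintro ⟨_, h⟩; exact h
      · intro h
        refine ⟨?_, h⟩
        obtain ⟨x, y, hx, hy, hc⟩ := hb
        have h1 : (x : G ⧸ center G) = (a.1 : G ⧸ center G) := by
          rw [hx, ← h]
        have h2 : (y : G ⧸ center G) = (a.2 : G ⧸ center G) := by
          rw [hy, ← h]
        exact commute_of_center_coset h1 h2 hc
    rw [hfilter]
    have hprod : f ⁻¹' {b} =
        ((QuotientGroup.mk : G → G ⧸ center G) ⁻¹' {b.1}) ×ˢ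
        ((QuotientGroup.mk : G → G ⧸ center G) ⁻¹' {b.2}) := by
      ext a
      simp [hf, Prod.ext_iff]
    rw [← Set.ncard_eq_toFinset_card', ← Nat.card_coe_set_eq, hprod,
      Nat.card_congr (Equiv.Set.prod _ _), Nat.card_prod, card_fiber, card_fiber, sq]
  rw [Finset.sum_congr rfl hfib, Finset.sum_const, smul_eq_mul]

end Helpers

/-- A compact group with center of finite index that is isoclinic to a
finite group has the same commuting probability as that finite group. -/
theorem cp_eq_commProb_of_isoclinic
    {F : Type*} [Group F] [TopologicalSpace F] [IsTopologicalGroup F] [CompactSpace F]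
    [T2Space F] [MeasurableSpace F] [BorelSpace F]
    (μ : Measure F) [μ.IsHaarMeasure] [μ.Regular] [IsProbabilityMeasure μ]
    [(Subgroup.center F).FiniteIndex]
    (H : Type*) [Group H] [Finite H] (h : Isoclinic F H) :
    ((μ.prod μ) {p : F × F | p.1 * p.2 = p.2 * p.1}).toReal = (commProb H : ℝ) := by
  classical
  obtain ⟨α, β, hiso⟩ := h
  -- the center of F is closed, hence measurable
  have hZc : IsClosed (center F : Set F) := by
    have : (center F : Set F) = ⋂ g : F, {x : F | g * x = x * g} := by
      ext x
      simp [Subgroup.mem_center_iff, Set.mem_iInter]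
    rw [this]
    exact isClosed_iInter fun g =>
      isClosed_eq (continuous_const.mul continuous_id) (continuous_id.mul continuous_const)
  have hfib_meas : ∀ q : F ⧸ center F,
      MeasurableSet ((QuotientGroup.mk : F → F ⧸ center F) ⁻¹' {q}) := by
    intro q
    obtain ⟨g, hg⟩ := fiber_eq q
    rw [hg]
    exact (measurable_const_mul g) hZc.measurableSet
  have hfib_measure : ∀ q : F ⧸ center F,
      μ ((QuotientGroup.mk : F → F ⧸ center F) ⁻¹' {q}) = μ (center F : Set F) := by
    intro q
    obtain ⟨g, hg⟩ := fiber_eq q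
    rw [hg, measure_preimage_mul]
  haveI : Finite (F ⧸ center F) := Subgroup.finite_quotient_of_finiteIndex
  haveI : Fintype (F ⧸ center F) := Fintype.ofFinite _
  set n : ℕ := Nat.card (F ⧸ center F) with hn
  have hn0 : (n : ℝ≥0∞) ≠ 0 := by
    simp [hn, Nat.card_pos.ne']
  have hntop : (n : ℝ≥0∞) ≠ ⊤ := ENNReal.natCast_ne_top n
  -- measure of each coset of the center
  have hmulZ : (n : ℝ≥0∞) * μ (center F : Set F) = 1 := by
    have hcover : (⋃ q : F ⧸ center F,
        ((QuotientGroup.mk : F → F ⧸ center F) ⁻¹' {q})) = Set.univ := by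
      ext x
      simp
    have hdisj : Pairwise (Function.onFun Disjoint
        fun q : F ⧸ center F => ((QuotientGroup.mk : F → F ⧸ center F) ⁻¹' {q})) := by
      intro a b hab
      simp only [Function.onFun]
      rw [Set.disjoint_left]
      rintro x hx hx'
      simp only [Set.mem_preimage, Set.mem_singleton_iff] at hx hx'
      exact hab (hx ▸ hx')
    have := measure_iUnion (μ := μ) hdisj hfib_meas
    rw [hcover, measure_univ, tsum_fintype] at this
    rw [this]
    simp_rw [hfib_measure]
    rw [Finset.sum_const, Finset.card_univ, nsmul_eq_mul, hn, Nat.card_eq_fintype_card]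
  have hμZ : μ (center F : Set F) = (n : ℝ≥0∞)⁻¹ := by
    calc μ (center F : Set F)
        = (n : ℝ≥0∞)⁻¹ * ((n : ℝ≥0∞) * μ (center F : Set F)) := by
          rw [← mul_assoc, ENNReal.inv_mul_cancel hn0 hntop, one_mul]
      _ = (n : ℝ≥0∞)⁻¹ := by rw [hmulZ, mul_one]
  -- decompose the commuting set into cosets
  have hSdecomp : {p : F × F | p.1 * p.2 = p.2 * p.1} =
      ⋃ b ∈ (QC F).toFinset,
        (((QuotientGroup.mk : F → F ⧸ center F) ⁻¹' {b.1}) ×ˢ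
         ((QuotientGroup.mk : F → F ⧸ center F) ⁻¹' {b.2})) := by
    ext ⟨x, y⟩
    simp only [Set.mem_setOf_eq, Set.mem_iUnion, Set.mem_toFinset, Set.mem_prod,
      Set.mem_preimage, Set.mem_singleton_iff]
    constructor
    · intro hxy
      exact ⟨((x : F ⧸ center F), (y : F ⧸ center F)), (mem_QC_iff x y).mpr hxy,
        rfl, rfl⟩
    · rintro ⟨b, hb, hx, hy⟩
      have : ((x : F ⧸ center F), (y : F ⧸ center F)) ∈ QC F := by
        rwa [hx, hy, Prod.mk.eta]
      exact (mem_QC_iff x y).mp this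
  rw [hSdecomp]
  rw [measure_biUnion_finset ?hd ?hm]
  case hd =>
    rintro a _ b _ hab
    rw [Function.onFun, Set.disjoint_left]
    rintro ⟨x, y⟩ hx hy
    simp only [Set.mem_prod, Set.mem_preimage, Set.mem_singleton_iff] at hx hy
    exact hab (by rw [← Prod.mk.eta (p := a), ← hx.1, ← hx.2, hy.1, hy.2, Prod.mk.eta])
  case hm =>
    exact fun b _ => (hfib_meas b.1).prod (hfib_meas b.2)
  simp_rw [Measure.prod_prod, hfib_measure, hμZ]
  rw [Finset.sum_const]
  -- identify the cardinalities via the isoclinism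
  set k : ℕ := Nat.card (QC F) with hk
  have hcardtf : (QC F).toFinset.card = k := by
    rw [hk, Nat.card_coe_set_eq, Set.ncard_eq_toFinset_card']
  rw [hcardtf]
  -- transfer through α
  have himage : (α.toEquiv.prodCongr α.toEquiv) '' (QC F) = QC H := by
    ext q
    constructor
    · rintro ⟨p, ⟨x, y, hx, hy, hc⟩, rfl⟩
      obtain ⟨x', hx'⟩ := QuotientGroup.mk_surjective (α (x : F ⧸ center F))
      obtain ⟨y', hy'⟩ := QuotientGroup.mk_surjective (α (y : F ⧸ center F))
      have hβ := hiso x y x' y' hx' hy'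
      have hone : (⟨⁅x, y⁆, commutator_mem_commutator' x y⟩ : ↥(commutator F)) = 1 := by
        ext
        simpa [commutatorElement_def] using (commutatorElement_eq_one_iff_mul_comm.mpr hc)
      rw [hone, map_one] at hβ
      have hc' : x' * y' = y' * x' := by
        have : ⁅x', y'⁆ = 1 := congrArg Subtype.val hβ
        exact commutatorElement_eq_one_iff_mul_comm.mp this
      refine ⟨x', y', ?_, ?_, hc'⟩
      · show (x' : H ⧸ center H) = α p.1
        rw [hx', hx]
      · show (y' : H ⧸ center H) = α p.2
        rw [hy', hy]
    · rintro ⟨x', y', hx', hy', hc'⟩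
      obtain ⟨x, hx⟩ := QuotientGroup.mk_surjective (α.symm q.1)
      obtain ⟨y, hy⟩ := QuotientGroup.mk_surjective (α.symm q.2)
      have hx'' : (x' : H ⧸ center H) = α (x : F ⧸ center F) := by
        rw [hx', hx, MulEquiv.apply_symm_apply]
      have hy'' : (y' : H ⧸ center H) = α (y : F ⧸ center F) := by
        rw [hy', hy, MulEquiv.apply_symm_apply]
      have hβ := hiso x y x' y' hx'' hy''
      have hone : (⟨⁅x', y'⁆, commutator_mem_commutator' x' y'⟩ : ↥(commutator H)) = 1 := by
        ext
        simpa using (commutatorElement_eq_one_iff_mul_comm.mpr hc')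
      rw [hone] at hβ
      have : (⟨⁅x, y⁆, commutator_mem_commutator' x y⟩ : ↥(commutator F)) = 1 :=
        β.injective (by rw [← hβ, map_one])
      have hc : x * y = y * x :=
        commutatorElement_eq_one_iff_mul_comm.mp (congrArg Subtype.val this)
      refine ⟨(α.symm q.1, α.symm q.2), ⟨x, y, hx, hy, hc⟩, ?_⟩
      show ((α (α.symm q.1) : H ⧸ center H), (α (α.symm q.2) : H ⧸ center H)) = q
      rw [MulEquiv.apply_symm_apply, MulEquiv.apply_symm_apply]
  have hkH : Nat.card (QC H) = k := by
    rw [← himage, Nat.card_image_of_injective (Equiv.injective _)]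
  have hnH : Nat.card (H ⧸ center H) = n := by
    rw [hn]
    exact (Nat.card_congr α.toEquiv).symm
  -- compute commProb H
  set κ : ℕ := Nat.card (center H) with hκ
  have hcardH : Nat.card H = n * κ := by
    rw [Subgroup.card_eq_card_quotient_mul_card_subgroup (center H), hnH, hκ]
  have hcomm : (commProb H : ℝ) = (k * κ ^ 2 : ℝ) / ((n * κ : ℕ) : ℝ) ^ 2 := by
    rw [commProb_def]
    push_cast
    rw [card_commuting_eq H, hkH, ← hκ, hcardH]
    push_cast
    ring
  rw [hcomm]
  have hκ0 : (κ : ℝ) ≠ 0 := by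
    simp [hκ, Nat.card_pos.ne']
  have hn0' : (n : ℝ) ≠ 0 := by
    simpa using fun h0 => hn0 (by exact_mod_cast congrArg (Nat.cast : ℕ → ℝ≥0∞) h0)
  simp only [nsmul_eq_mul, ENNReal.toReal_mul, ENNReal.toReal_inv, ENNReal.toReal_natCast]
  push_cast
  field_simp
end

section
/- Let G be a compact Hausdorff topological group and let y ∈ G be an element whose conjugacy class is infinite. Then the centralizer C_G(y) = {a ∈ G : ay = ya} has Haar measure 0 in G. -/
open MeasureTheory Subgroup
open scoped commutatorElement

/-- The centralizer of an element with infinite conjugacy class is a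
Haar null set. -/
theorem haar_measure_centralizer_eq_zero
    {G : Type*} [Group G] [TopologicalSpace G] [IsTopologicalGroup G] [CompactSpace G]
    [T2Space G] [MeasurableSpace G] [BorelSpace G]
    (μ : Measure G) [μ.IsHaarMeasure] [μ.Regular] [IsProbabilityMeasure μ]
    (y : G) (hy : {z : G | ∃ g : G, g * y * g⁻¹ = z}.Infinite) :
    μ {a : G | a * y = y * a} = 0 := by
  set S : Set G := {a : G | a * y = y * a} with hSdef
  have hSc : IsClosed S :=
    isClosed_eq (continuous_id.mul continuous_const) (continuous_const.mul continuous_id)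
  have hSm : MeasurableSet S := hSc.measurableSet
  by_contra h
  let f := hy.natEmbedding
  choose g hg using fun n => (f n).2
  set T : ℕ → Set G := fun n => (fun x => (g n)⁻¹ * x) ⁻¹' S with hTdef
  have hTm : ∀ n, MeasurableSet (T n) := fun n => hSm.preimage (measurable_const_mul _)
  have hTμ : ∀ n, μ (T n) = μ S := fun n => measure_preimage_mul μ _ S
  have key : ∀ n a, a ∈ T n → a * y * a⁻¹ = (f n : G) := by
    intro n a ha
    have hs : ((g n)⁻¹ * a) * y = y * ((g n)⁻¹ * a) := ha
    rw [← hg n]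
    have : a * y * a⁻¹ = g n * (((g n)⁻¹ * a) * y * ((g n)⁻¹ * a)⁻¹) * (g n)⁻¹ := by
      group
    rw [this, hs]
    group
  have hdisj : Pairwise (Function.onFun Disjoint T) := by
    intro i j hij
    rw [Function.onFun, Set.disjoint_left]
    intro a hai haj
    apply hij
    apply f.injective
    apply Subtype.ext
    rw [← key i a hai, ← key j a haj]
  have hsum : μ (⋃ n, T n) = ∑' n : ℕ, μ (T n) := measure_iUnion hdisj hTm
  have hle : μ (⋃ n, T n) ≤ 1 := by
    rw [← measure_univ (μ := μ)]
    exact measure_mono (Set.subset_univ _)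
  rw [hsum] at hle
  simp only [hTμ] at hle
  rw [ENNReal.tsum_const_eq_top_of_ne_zero h] at hle
  simp at hle
end

section
/- Let G be a compact Hausdorff topological group. If cp(G) > 1/4, then G equals its FC-center, i.e., every element of G has a finite conjugacy class. -/
open MeasureTheory Subgroup
open scoped ENNReal Pointwise commutatorElement

/-! ### Auxiliary material -/

/-- On a product of compact Hausdorff spaces, every continuous real-valued function is
measurable with respect to the product σ-algebra, by Stone–Weierstrass. -/
lemma measurable_of_continuous_prod
    {X Y : Type*} [TopologicalSpace X] [TopologicalSpace Y]
    [CompactSpace X] [CompactSpace Y] [T2Space X] [T2Space Y]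
    [MeasurableSpace X] [MeasurableSpace Y] [BorelSpace X] [BorelSpace Y]
    (F : C(X × Y, ℝ)) : Measurable (F : X × Y → ℝ) := by
  set s : Set C(X × Y, ℝ) :=
    {g | ∃ f : C(X, ℝ), g = f.comp ⟨Prod.fst, continuous_fst⟩} ∪
    {g | ∃ f : C(Y, ℝ), g = f.comp ⟨Prod.snd, continuous_snd⟩} with hs
  set A : Subalgebra ℝ C(X × Y, ℝ) := Algebra.adjoin ℝ s with hA
  have hsep : A.SeparatesPoints := by
    intro p q hpq
    have h1 : p.1 ≠ q.1 ∨ p.2 ≠ q.2 := by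
      by_contra hc
      push_neg at hc
      exact hpq (Prod.ext hc.1 hc.2)
    rcases h1 with h1 | h1
    · obtain ⟨f, hf0, hf1, -⟩ := exists_continuous_zero_one_of_isClosed
        (isClosed_singleton (x := p.1)) (isClosed_singleton (x := q.1))
        (Set.disjoint_singleton.mpr h1)
      refine ⟨_, ⟨f.comp ⟨Prod.fst, continuous_fst⟩,
        Algebra.subset_adjoin (Or.inl ⟨f, rfl⟩), rfl⟩, ?_⟩
      simp only [ContinuousMap.comp_apply, ContinuousMap.coe_mk]
      rw [hf0 rfl, hf1 rfl]
      norm_num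
    · obtain ⟨f, hf0, hf1, -⟩ := exists_continuous_zero_one_of_isClosed
        (isClosed_singleton (x := p.2)) (isClosed_singleton (x := q.2))
        (Set.disjoint_singleton.mpr h1)
      refine ⟨_, ⟨f.comp ⟨Prod.snd, continuous_snd⟩,
        Algebra.subset_adjoin (Or.inr ⟨f, rfl⟩), rfl⟩, ?_⟩
      simp only [ContinuousMap.comp_apply, ContinuousMap.coe_mk]
      rw [hf0 rfl, hf1 rfl]
      norm_num
  have htop := ContinuousMap.subalgebra_topologicalClosure_eq_top_of_separatesPoints A hsep
  have hFmem : (F : C(X × Y, ℝ)) ∈ closure (A : Set C(X × Y, ℝ)) := by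
    have : F ∈ A.topologicalClosure := htop ▸ Algebra.mem_top
    exact this
  obtain ⟨u, hu, hulim⟩ := mem_closure_iff_seq_limit.mp hFmem
  have humeas : ∀ n, Measurable ((u n : C(X × Y, ℝ)) : X × Y → ℝ) := by
    intro n
    refine Algebra.adjoin_induction (s := s)
      (p := fun (g : C(X × Y, ℝ)) _ => Measurable (g : X × Y → ℝ)) ?_ ?_ ?_ ?_ (hu n)
    · rintro g (⟨f, rfl⟩ | ⟨f, rfl⟩)
      · exact (map_continuous f).measurable.comp measurable_fst
      · exact (map_continuous f).measurable.comp measurable_snd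
    · intro r
      exact measurable_const
    · intro g₁ g₂ _ _ h₁ h₂
      exact h₁.add h₂
    · intro g₁ g₂ _ _ h₁ h₂
      exact h₁.mul h₂
  have hpt : ∀ p, Filter.Tendsto (fun n => (u n : X × Y → ℝ) p) Filter.atTop (nhds (F p)) :=
    fun p => ((continuous_eval_const p).continuousAt.tendsto.comp hulim : _)
  exact measurable_of_tendsto_metrizable humeas (tendsto_pi_nhds.mpr hpt)

section NormalSetMachinery

set_option linter.unusedSectionVars false

variable {G : Type*} [Group G] [TopologicalSpace G] [IsTopologicalGroup G] [CompactSpace G]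
  [T2Space G] [MeasurableSpace G] [BorelSpace G]

/-- A set that behaves like a normal subgroup. -/
structure IsNormalSet (N : Set G) : Prop where
  one_mem : (1 : G) ∈ N
  mul_mem : ∀ {a b : G}, a ∈ N → b ∈ N → a * b ∈ N
  inv_mem : ∀ {a : G}, a ∈ N → a⁻¹ ∈ N
  conj_mem : ∀ {a : G} (k : G), a ∈ N → k * a * k⁻¹ ∈ N

/-- The "centralizer modulo `N`" of `a`. -/
def CsetN (N : Set G) (a : G) : Set G := {b : G | b * a * b⁻¹ * a⁻¹ ∈ N}

/-- Elements whose conjugacy class meets only finitely many cosets of `N`. -/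
def FCsetN (N : Set G) : Set G :=
  {a : G | ∃ T : Finset G, ∀ g : G, ∃ t ∈ T, g * a * g⁻¹ * t⁻¹ ∈ N}

variable {N : Set G}

lemma csetN_mul (hN : IsNormalSet N) {a b b' : G}
    (hb : b ∈ CsetN N a) (hb' : b' ∈ CsetN N a) : b * b' ∈ CsetN N a := by
  have key : (b * b') * a * (b * b')⁻¹ * a⁻¹
      = b * (b' * a * b'⁻¹ * a⁻¹) * b⁻¹ * (b * a * b⁻¹ * a⁻¹) := by group
  show _ ∈ N
  rw [key]
  exact hN.mul_mem (hN.conj_mem b hb') hb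

lemma csetN_inv (hN : IsNormalSet N) {a b : G}
    (hb : b ∈ CsetN N a) : b⁻¹ ∈ CsetN N a := by
  have key : b⁻¹ * a * (b⁻¹)⁻¹ * a⁻¹ = b⁻¹ * (b * a * b⁻¹ * a⁻¹)⁻¹ * (b⁻¹)⁻¹ := by group
  show _ ∈ N
  rw [key]
  exact hN.conj_mem b⁻¹ (hN.inv_mem hb)

lemma csetN_symm (hN : IsNormalSet N) {a b : G}
    (hb : b ∈ CsetN N a) : a ∈ CsetN N b := by
  have key : a * b * a⁻¹ * b⁻¹ = (b * a * b⁻¹ * a⁻¹)⁻¹ := by group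
  show _ ∈ N
  rw [key]
  exact hN.inv_mem hb

lemma fcsetN_mul (hN : IsNormalSet N) {a b : G}
    (ha : a ∈ FCsetN N) (hb : b ∈ FCsetN N) : a * b ∈ FCsetN N := by
  classical
  obtain ⟨T, hT⟩ := ha
  obtain ⟨S, hS⟩ := hb
  refine ⟨T * S, fun g => ?_⟩
  obtain ⟨t, ht, h1⟩ := hT g
  obtain ⟨s, hs, h2⟩ := hS g
  refine ⟨t * s, Finset.mul_mem_mul ht hs, ?_⟩
  have key : g * (a * b) * g⁻¹ * (t * s)⁻¹
      = (g * a * g⁻¹ * t⁻¹) * (t * (g * b * g⁻¹ * s⁻¹) * t⁻¹) := by group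
  rw [key]
  exact hN.mul_mem h1 (hN.conj_mem t h2)

lemma fcsetN_inv (hN : IsNormalSet N) {a : G}
    (ha : a ∈ FCsetN N) : a⁻¹ ∈ FCsetN N := by
  classical
  obtain ⟨T, hT⟩ := ha
  refine ⟨T⁻¹, fun g => ?_⟩
  obtain ⟨t, ht, h1⟩ := hT g
  refine ⟨t⁻¹, Finset.inv_mem_inv ht, ?_⟩
  have key : g * a⁻¹ * g⁻¹ * (t⁻¹)⁻¹ = t⁻¹ * (g * a * g⁻¹ * t⁻¹)⁻¹ * (t⁻¹)⁻¹ := by group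
  rw [key]
  exact hN.conj_mem t⁻¹ (hN.inv_mem h1)

/-- From an element outside `FCsetN N`, extract a sequence of conjugates lying in pairwise
distinct cosets of `N`. -/
lemma exists_seq_of_not_mem_fcsetN (hN : IsNormalSet N) {a : G} (ha : a ∉ FCsetN N) :
    ∃ c : ℕ → G, (∀ n, ∃ g : G, g * a * g⁻¹ = c n) ∧
      ∀ n m, n ≠ m → c n * (c m)⁻¹ ∉ N := by
  classical
  have H : ∀ T : Finset G, ∃ g : G, ∀ t ∈ T, g * a * g⁻¹ * t⁻¹ ∉ N := by
    intro T
    by_contra hc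
    push_neg at hc
    exact ha ⟨T, hc⟩
  choose pick hpick using H
  let conj : Finset G → G := fun T => pick T * a * (pick T)⁻¹
  let Fs : ℕ → Finset G := fun n => Nat.rec ∅ (fun _ T => insert (conj T) T) n
  let c : ℕ → G := fun n => conj (Fs n)
  have hFs_succ : ∀ n, Fs (n + 1) = insert (c n) (Fs n) := fun n => rfl
  have hFs_mono : ∀ {n m : ℕ}, n ≤ m → Fs n ⊆ Fs m := by
    intro n m hnm
    induction hnm with
    | refl => exact Finset.Subset.refl _
    | step _ ih => exact ih.trans (by rw [hFs_succ]; exact Finset.subset_insert _ _)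
  have hc_mem : ∀ {n m : ℕ}, n < m → c n ∈ Fs m := by
    intro n m hnm
    have h1 : c n ∈ Fs (n + 1) := by rw [hFs_succ]; exact Finset.mem_insert_self _ _
    exact hFs_mono hnm h1
  have hkey : ∀ m, ∀ t ∈ Fs m, c m * t⁻¹ ∉ N := fun m t ht => hpick (Fs m) t ht
  refine ⟨c, fun n => ⟨pick (Fs n), rfl⟩, ?_⟩
  intro n m hnm hmem
  rcases hnm.lt_or_gt with h | h
  · -- n < m : c n ∈ Fs m, and (c n * (c m)⁻¹)⁻¹ = c m * (c n)⁻¹ ∈ N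
    apply hkey m (c n) (hc_mem h)
    have : (c n * (c m)⁻¹)⁻¹ = c m * (c n)⁻¹ := by group
    rw [← this]
    exact hN.inv_mem hmem
  · exact hkey n (c m) (hc_mem h) hmem

lemma measure_le_half (μ : Measure G) [IsProbabilityMeasure μ] [μ.IsMulLeftInvariant]
    {A : Set G} (hA : MeasurableSet A) (g : G)
    (hdisj : Disjoint A ((g * ·) ⁻¹' A)) : μ A ≤ 1/2 := by
  have hB : MeasurableSet ((g * ·) ⁻¹' A) := hA.preimage (measurable_const_mul g)
  have h1 : μ A + μ ((g * ·) ⁻¹' A) ≤ 1 := by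
    rw [← measure_union hdisj hB]
    exact prob_le_one
  rw [measure_preimage_mul μ g A] at h1
  rw [ENNReal.le_div_iff_mul_le (Or.inl two_ne_zero) (Or.inl ENNReal.ofNat_ne_top)]
  rwa [mul_two]

/-- If the conjugacy class of `a` meets infinitely many cosets of `N`,
then its mod-`N` centralizer is null. -/
lemma measure_csetN_eq_zero (hN : IsNormalSet N)
    (μ : Measure G) [IsProbabilityMeasure μ] [μ.IsMulLeftInvariant]
    {a : G} (hmeas : MeasurableSet (CsetN N a)) (ha : a ∉ FCsetN N) :
    μ (CsetN N a) = 0 := by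
  obtain ⟨c, hconj, hsep⟩ := exists_seq_of_not_mem_fcsetN hN ha
  choose g hg using hconj
  set A : ℕ → Set G := fun n => ((g n)⁻¹ * ·) ⁻¹' (CsetN N a) with hA
  have hmeasA : ∀ n, MeasurableSet (A n) := fun n =>
    hmeas.preimage (measurable_const_mul _)
  have hμA : ∀ n, μ (A n) = μ (CsetN N a) := fun n => measure_preimage_mul μ _ _
  have hdisj : Pairwise (Function.onFun Disjoint A) := by
    intro n m hnm
    rw [Function.onFun, Set.disjoint_left]
    intro h hn hm
    apply hsep n m hnm
    have hu : ((g n)⁻¹ * h) * a * ((g n)⁻¹ * h)⁻¹ * a⁻¹ ∈ N := hn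
    have hv : ((g m)⁻¹ * h) * a * ((g m)⁻¹ * h)⁻¹ * a⁻¹ ∈ N := hm
    have key : c n * (c m)⁻¹ =
        h * ((((g n)⁻¹ * h)⁻¹ * (((g n)⁻¹ * h) * a * ((g n)⁻¹ * h)⁻¹ * a⁻¹)⁻¹ * (((g n)⁻¹ * h)⁻¹)⁻¹) *
             (((g m)⁻¹ * h)⁻¹ * (((g m)⁻¹ * h) * a * ((g m)⁻¹ * h)⁻¹ * a⁻¹) * (((g m)⁻¹ * h)⁻¹)⁻¹)) *
          h⁻¹ := by
      rw [← hg n, ← hg m]; group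
    rw [key]
    exact hN.conj_mem h (hN.mul_mem
      (hN.conj_mem ((g n)⁻¹ * h)⁻¹ (hN.inv_mem hu))
      (hN.conj_mem ((g m)⁻¹ * h)⁻¹ hv))
  by_contra h0
  have hsum : (⊤ : ℝ≥0∞) ≤ 1 := by
    calc (⊤ : ℝ≥0∞) = ∑' _ : ℕ, μ (CsetN N a) := (ENNReal.tsum_const_eq_top_of_ne_zero h0).symm
      _ = ∑' n, μ (A n) := by simp [hμA]
      _ = μ (⋃ n, A n) := (measure_iUnion hdisj hmeasA).symm
      _ ≤ 1 := prob_le_one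
  simp at hsum

/-- If the conjugates of `x` contain a sequence in pairwise distinct cosets of `N`,
then `x ∉ FCsetN N`. -/
lemma not_mem_fcsetN (hN : IsNormalSet N) {x : G} (c : ℕ → G)
    (hconj : ∀ n, ∃ g : G, g * x * g⁻¹ = c n)
    (hsep : ∀ n m, n ≠ m → c n * (c m)⁻¹ ∉ N) : x ∉ FCsetN N := by
  rintro ⟨T, hT⟩
  choose g hg using hconj
  have ht : ∀ n, ∃ t ∈ T, c n * t⁻¹ ∈ N := by
    intro n
    obtain ⟨t, htT, htn⟩ := hT (g n)
    exact ⟨t, htT, by rwa [hg n] at htn⟩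
  choose t htT htn using ht
  obtain ⟨n, m, hnm, heq⟩ := Finite.exists_ne_map_eq_of_infinite
    (fun n : ℕ => (⟨t n, htT n⟩ : {y // y ∈ T}))
  apply hsep n m hnm
  have htmn : t n = t m := congrArg Subtype.val heq
  have key : c n * (c m)⁻¹ = (c n * (t n)⁻¹) * (c m * (t n)⁻¹)⁻¹ := by group
  rw [key, htmn]
  exact hN.mul_mem (htmn ▸ htn n) (hN.inv_mem (htn m))

/-- The translation machinery producing normal-like sets from continuous functions. -/
def PhiMap (f : C(G, ℝ)) : C(G, C(G × G, ℝ)) :=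
  ContinuousMap.curry
    ⟨fun q : G × (G × G) => f (q.2.1 * q.1 * q.2.2),
      (map_continuous f).comp
        (((continuous_fst.comp continuous_snd).mul continuous_fst).mul
          (continuous_snd.comp continuous_snd))⟩

noncomputable def DD (f : C(G, ℝ)) : G → ℝ := fun g => ‖PhiMap f g - PhiMap f 1‖

lemma continuous_DD (f : C(G, ℝ)) : Continuous (DD f) :=
  ((map_continuous (PhiMap f)).sub continuous_const).norm

lemma DD_eq_zero_iff (f : C(G, ℝ)) (g : G) :
    DD f g = 0 ↔ ∀ h h' : G, f (h * g * h') = f (h * h') := by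
  unfold DD
  rw [norm_eq_zero, sub_eq_zero, ContinuousMap.ext_iff]
  constructor
  · intro hp h h'
    have := hp (h, h')
    simpa [PhiMap, mul_one] using this
  · intro hp p
    simpa [PhiMap, mul_one] using hp p.1 p.2

end NormalSetMachinery

/-- If `cp G > 1/4` then `G` equals its FC-center. -/
theorem fcCenter_eq_top_of_cp_gt_quarter
    {G : Type*} [Group G] [TopologicalSpace G] [IsTopologicalGroup G] [CompactSpace G]
    [T2Space G] [MeasurableSpace G] [BorelSpace G]
    (μ : Measure G) [μ.IsHaarMeasure] [μ.Regular] [IsProbabilityMeasure μ]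
    (h : (1 / 4 : ℝ) < ((μ.prod μ) {p : G × G | p.1 * p.2 = p.2 * p.1}).toReal) :
    fcCenter G = ⊤ := by
  by_contra hne
  obtain ⟨x, hx⟩ : ∃ x : G, x ∉ fcCenter G := by
    by_contra h'
    push_neg at h'
    exact hne ((Subgroup.eq_top_iff' _).mpr h')
  have hx' : ¬ {y : G | ∃ g : G, g * x * g⁻¹ = y}.Finite := hx
  have hinf : {y : G | ∃ g : G, g * x * g⁻¹ = y}.Infinite := hx'
  set c0 := hinf.natEmbedding with hc0
  set cc : ℕ → G := fun n => (c0 n : G) with hcc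
  have hcc_inj : Function.Injective cc := by
    intro n m hnm
    exact c0.injective (Subtype.ext hnm)
  have hcc_conj : ∀ n, ∃ g : G, g * x * g⁻¹ = cc n := fun n => (c0 n).2
  -- choose separating continuous functions
  have hsel : ∀ q : ℕ × ℕ, ∃ f : C(G, ℝ), q.1 ≠ q.2 → f (cc q.1) ≠ f (cc q.2) := by
    intro q
    by_cases hq : q.1 = q.2
    · exact ⟨ContinuousMap.const G 0, fun hc => absurd hq hc⟩
    · obtain ⟨f, hf0, hf1, -⟩ := exists_continuous_zero_one_of_isClosed
        (isClosed_singleton (x := cc q.1)) (isClosed_singleton (x := cc q.2))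
        (Set.disjoint_singleton.mpr (fun hc => hq (hcc_inj hc)))
      refine ⟨f, fun _ => ?_⟩
      rw [hf0 rfl, hf1 rfl]
      norm_num
  choose F hF using hsel
  -- the normal-like set N
  set N : Set G := {g : G | ∀ q : ℕ × ℕ, ∀ h h' : G, F q (h * g * h') = F q (h * h')} with hN
  have hNnorm : IsNormalSet N := by
    constructor
    · intro q h h'; rw [mul_one]
    · intro a b ha hb q h h'
      have e1 : h * (a * b) * h' = h * a * (b * h') := by group
      rw [e1, ha q h (b * h'), ← mul_assoc, hb q h h']
    · intro a ha q h h'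
      have := ha q (h * a⁻¹) h'
      have e1 : h * a⁻¹ * a * h' = h * h' := by group
      rw [e1] at this
      exact this.symm
    · intro a k ha q h h'
      have := ha q (h * k) (k⁻¹ * h')
      have e1 : h * k * a * (k⁻¹ * h') = h * (k * a * k⁻¹) * h' := by group
      have e2 : h * k * (k⁻¹ * h') = h * h' := by group
      rw [e1, e2] at this
      exact this
  -- separation of the conjugates of x modulo N
  have hsepN : ∀ n m, n ≠ m → cc n * (cc m)⁻¹ ∉ N := by
    intro n m hnm hmem
    apply hF (n, m) hnm
    have := hmem (n, m) 1 (cc m)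
    have e1 : 1 * (cc n * (cc m)⁻¹) * cc m = cc n := by group
    have e2 : (1 : G) * cc m = cc m := one_mul _
    rw [e1, e2] at this
    exact this
  have hxFC : x ∉ FCsetN N := not_mem_fcsetN hNnorm cc hcc_conj hsepN
  -- the measurable superset S_N of the commuting pairs
  set S : Set (G × G) := {p : G × G | p.1 * p.2 = p.2 * p.1} with hS
  set SN : Set (G × G) := {p : G × G | p.2 * p.1 * p.2⁻¹ * p.1⁻¹ ∈ N} with hSN
  have hSsub : S ⊆ SN := by
    intro p hp
    have hp' : p.1 * p.2 = p.2 * p.1 := hp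
    show p.2 * p.1 * p.2⁻¹ * p.1⁻¹ ∈ N
    have e : p.2 * p.1 * p.2⁻¹ * p.1⁻¹ = 1 := by
      rw [← hp']; group
    rw [e]
    exact hNnorm.one_mem
  have hSNmeas : MeasurableSet SN := by
    have hrw : SN = ⋂ q : ℕ × ℕ,
        (fun p : G × G => DD (F q) (p.2 * p.1 * p.2⁻¹ * p.1⁻¹)) ⁻¹' {0} := by
      ext p
      simp only [hSN, Set.mem_setOf_eq, Set.mem_iInter, Set.mem_preimage,
        Set.mem_singleton_iff, hN]
      constructor
      · intro hp q
        rw [DD_eq_zero_iff]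
        exact hp q
      · intro hp q
        exact (DD_eq_zero_iff (F q) _).mp (hp q)
    rw [hrw]
    refine MeasurableSet.iInter fun q => ?_
    have hcont : Continuous fun p : G × G => DD (F q) (p.2 * p.1 * p.2⁻¹ * p.1⁻¹) :=
      (continuous_DD (F q)).comp
        (((continuous_snd.mul continuous_fst).mul continuous_snd.inv).mul continuous_fst.inv)
    exact measurable_of_continuous_prod ⟨_, hcont⟩ (measurableSet_singleton 0)
  have hsec : ∀ a : G, Prod.mk a ⁻¹' SN = CsetN N a := fun a => rfl
  have hCmeas : ∀ a : G, MeasurableSet (CsetN N a) := by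
    intro a
    rw [← hsec a]
    exact hSNmeas.preimage measurable_prodMk_left
  have hf : Measurable (fun a => μ (CsetN N a)) := by
    have := measurable_measure_prodMk_left (ν := μ) hSNmeas
    simpa [hsec] using this
  set FCm : Set G := {a : G | μ (CsetN N a) ≠ 0} with hFCm
  have hFCmeas : MeasurableSet FCm := by
    have hrw : FCm = (fun a => μ (CsetN N a)) ⁻¹' {0}ᶜ := by ext a; simp [hFCm]
    rw [hrw]
    exact hf (measurableSet_singleton 0).compl
  have hFCsub : ∀ a, μ (CsetN N a) ≠ 0 → a ∈ FCsetN N := by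
    intro a ha
    by_contra ha'
    exact ha (measure_csetN_eq_zero hNnorm μ (hCmeas a) ha')
  have hμCx : μ (CsetN N x) = 0 := measure_csetN_eq_zero hNnorm μ (hCmeas x) hxFC
  have hFCm_half : μ FCm ≤ 1/2 := by
    apply measure_le_half μ hFCmeas x
    rw [Set.disjoint_left]
    intro y hy hxy
    apply hxFC
    have h1 : y ∈ FCsetN N := hFCsub y hy
    have h2 : x * y ∈ FCsetN N := hFCsub (x * y) hxy
    have h3 := fcsetN_mul hNnorm h2 (fcsetN_inv hNnorm h1)
    simpa using h3
  have hpt : ∀ a, μ (CsetN N a) ≤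
      (1/2) * FCm.indicator 1 a + (CsetN N x).indicator 1 a := by
    intro a
    by_cases h0 : μ (CsetN N a) = 0
    · simp [h0]
    by_cases hax : a ∈ CsetN N x
    · calc μ (CsetN N a) ≤ 1 := prob_le_one
        _ ≤ _ := by
          rw [Set.indicator_of_mem hax]
          simp
    · have ha2 : μ (CsetN N a) ≤ 1/2 := by
        apply measure_le_half μ (hCmeas a) x
        rw [Set.disjoint_left]
        intro b hb hxb
        apply hax
        -- x = (x*b) * b⁻¹ ∈ CsetN N a, then symmetry gives a ∈ CsetN N x
        have h1 : x ∈ CsetN N a := by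
          have := csetN_mul hNnorm hxb (csetN_inv hNnorm hb)
          simpa using this
        exact csetN_symm hNnorm h1
      calc μ (CsetN N a) ≤ 1/2 := ha2
        _ ≤ _ := by
          rw [Set.indicator_of_mem (show a ∈ FCm from h0)]
          simp
  have hcp : (μ.prod μ) S ≤ 1/4 := by
    refine le_trans (measure_mono hSsub) ?_
    rw [Measure.prod_apply hSNmeas]
    simp_rw [hsec]
    calc ∫⁻ a, μ (CsetN N a) ∂μ
        ≤ ∫⁻ a, ((1/2) * FCm.indicator 1 a + (CsetN N x).indicator 1 a) ∂μ :=
          lintegral_mono hpt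
      _ = (1/2) * μ FCm + μ (CsetN N x) := by
          rw [lintegral_add_left ((measurable_one.indicator hFCmeas).const_mul _),
            lintegral_const_mul _ (measurable_one.indicator hFCmeas),
            lintegral_indicator_one hFCmeas, lintegral_indicator_one (hCmeas x)]
      _ ≤ (1/2) * (1/2) + 0 := by
          rw [hμCx]
          exact add_le_add (mul_le_mul_right hFCm_half _) le_rfl
      _ = 1/4 := by
          rw [add_zero]
          rw [show ((1:ℝ≥0∞)/2) = 2⁻¹ by rw [one_div], show ((1:ℝ≥0∞)/4) = 4⁻¹ by rw [one_div],
            ← ENNReal.mul_inv (Or.inl two_ne_zero) (Or.inl ENNReal.ofNat_ne_top)]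
          norm_num
  have hreal : ((μ.prod μ) S).toReal ≤ 1/4 := by
    have := ENNReal.toReal_mono (by norm_num) hcp
    rw [show ((1:ℝ≥0∞)/4).toReal = 1/4 by simp] at this
    exact this
  linarith
end

section
/- Let G be a compact Hausdorff topological group. If cp(G) > 3/40, then the FC-center FC(G) has index at most 3 in G and the derived subgroup G' is contained in FC(G). -/
open MeasureTheory Subgroup
open scoped ENNReal
open scoped commutatorElement

section AuxGroup
variable {G : Type*} [Group G]

lemma mem_fcCenter_iff {x : G} :
    x ∈ fcCenter G ↔ {y : G | ∃ g : G, g * x * g⁻¹ = y}.Finite := Iff.rfl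

instance fcCenter_normal : (fcCenter G).Normal := by
  constructor
  intro x hx g
  rw [mem_fcCenter_iff] at hx ⊢
  apply hx.subset
  rintro y ⟨h, rfl⟩
  exact ⟨h * g, by group⟩

lemma conj_eq_of_mem_centralizer {x a b : G}
    (h : a⁻¹ * b ∈ Subgroup.centralizer ({x} : Set G)) :
    a * x * a⁻¹ = b * x * b⁻¹ := by
  rw [Subgroup.mem_centralizer_iff] at h
  have hx : x * (a⁻¹ * b) = (a⁻¹ * b) * x := h x (Set.mem_singleton x)
  have key : (a⁻¹ * b) * x * (a⁻¹ * b)⁻¹ = x := by rw [← hx]; group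
  calc a * x * a⁻¹ = a * ((a⁻¹ * b) * x * (a⁻¹ * b)⁻¹) * a⁻¹ := by rw [key]
    _ = b * x * b⁻¹ := by group

/-- The conjugation map on the quotient by the centralizer. -/
noncomputable def conjLift (x : G) (q : G ⧸ Subgroup.centralizer ({x} : Set G)) : G :=
  Quotient.liftOn' q (fun g => g * x * g⁻¹) fun a b hab =>
    conj_eq_of_mem_centralizer (QuotientGroup.leftRel_apply.mp hab)

lemma range_conjLift (x : G) :
    Set.range (conjLift x) = {y : G | ∃ g : G, g * x * g⁻¹ = y} := by
  ext y
  constructor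
  · rintro ⟨q, rfl⟩
    induction q using Quotient.inductionOn' with
    | h g => exact ⟨g, rfl⟩
  · rintro ⟨g, rfl⟩
    exact ⟨(g : G ⧸ Subgroup.centralizer ({x} : Set G)), rfl⟩

lemma conjLift_injective (x : G) : Function.Injective (conjLift x) := by
  intro q₁ q₂ hq
  induction q₁ using Quotient.inductionOn' with
  | h a =>
  induction q₂ using Quotient.inductionOn' with
  | h b =>
  have h : a * x * a⁻¹ = b * x * b⁻¹ := hq
  apply Quotient.sound'
  rw [QuotientGroup.leftRel_apply]
  rw [Subgroup.mem_centralizer_iff]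
  rintro m rfl
  have hm : m * (a⁻¹ * b) = a⁻¹ * (a * m * a⁻¹) * b := by group
  rw [hm, h]
  group

lemma mem_fcCenter_iff_finite_quotient (x : G) :
    x ∈ fcCenter G ↔ Finite (G ⧸ Subgroup.centralizer ({x} : Set G)) := by
  rw [mem_fcCenter_iff, ← range_conjLift]
  constructor
  · intro hfin
    haveI := hfin.to_subtype
    exact Finite.of_injective (fun q => (⟨conjLift x q, Set.mem_range_self q⟩ :
      Set.range (conjLift x))) fun a b hab => conjLift_injective x (Subtype.ext_iff.mp hab)
  · intro _
    exact Set.finite_range _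

/-- The set of elements any `n+1` of whose conjugates contain a repetition;
this is the set of elements with at most `n` conjugates. -/
def FnSet (G : Type*) [Group G] (n : ℕ) : Set G :=
  {x : G | ∀ g : Fin (n + 1) → G,
    ∃ i j, i ≠ j ∧ g i * x * (g i)⁻¹ = g j * x * (g j)⁻¹}

lemma mem_fcCenter_iff_exists_fnSet (x : G) :
    x ∈ fcCenter G ↔ ∃ n, x ∈ FnSet G n := by
  constructor
  · intro hx
    have hfin := mem_fcCenter_iff.mp hx
    refine ⟨hfin.toFinset.card, fun g => ?_⟩
    have hmem : ∀ i : Fin (hfin.toFinset.card + 1),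
        g i * x * (g i)⁻¹ ∈ hfin.toFinset := by
      intro i; rw [Set.Finite.mem_toFinset]; exact ⟨g i, rfl⟩
    obtain ⟨i, j, hij, hval⟩ := Fintype.exists_ne_map_eq_of_card_lt
      (fun i : Fin (hfin.toFinset.card + 1) =>
        (⟨g i * x * (g i)⁻¹, hmem i⟩ : {y // y ∈ hfin.toFinset}))
      (by simp)
    exact ⟨i, j, hij, by simpa using congrArg Subtype.val hval⟩
  · rintro ⟨n, hn⟩
    rw [mem_fcCenter_iff]
    by_contra hinf
    have hinf' : {y : G | ∃ g, g * x * g⁻¹ = y}.Infinite := hinf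
    obtain ⟨t, hts, hcard⟩ := hinf'.exists_subset_card_eq (n + 1)
    have hy : ∀ y ∈ t, ∃ g : G, g * x * g⁻¹ = y := fun y hyt => hts hyt
    choose gf hgf using hy
    let e : Fin (n + 1) → {y // y ∈ t} := fun i => t.equivFin.symm (Fin.cast hcard.symm i)
    have he : Function.Injective e := fun i j hij => by
      have := congrArg t.equivFin hij
      simpa [e, Fin.ext_iff] using this
    obtain ⟨i, j, hij, heq⟩ := hn fun i => gf (e i) (e i).2
    rw [hgf _ (e i).2, hgf _ (e j).2] at heq
    exact hij (he (Subtype.ext heq))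

end AuxGroup

section AuxTop
variable {G : Type*} [Group G] [TopologicalSpace G] [IsTopologicalGroup G] [T2Space G]

lemma isClosed_fnSet (G : Type*) [Group G] [TopologicalSpace G] [IsTopologicalGroup G]
    [T2Space G] (n : ℕ) : IsClosed (FnSet G n) := by
  have hrw : FnSet G n = ⋂ g : Fin (n + 1) → G, ⋃ p : Fin (n + 1) × Fin (n + 1),
      {x : G | p.1 ≠ p.2 ∧ g p.1 * x * (g p.1)⁻¹ = g p.2 * x * (g p.2)⁻¹} := by
    ext x
    constructor
    · intro hx
      refine Set.mem_iInter.mpr fun g => Set.mem_iUnion.mpr ?_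
      obtain ⟨i, j, hij, hval⟩ := hx g
      exact ⟨(i, j), hij, hval⟩
    · intro hx g
      obtain ⟨p, hij, hval⟩ := Set.mem_iUnion.mp (Set.mem_iInter.mp hx g)
      exact ⟨p.1, p.2, hij, hval⟩
  rw [hrw]
  refine isClosed_iInter fun g => isClosed_iUnion_of_finite fun p => ?_
  by_cases hp : p.1 ≠ p.2
  · have : {x : G | p.1 ≠ p.2 ∧ g p.1 * x * (g p.1)⁻¹ = g p.2 * x * (g p.2)⁻¹}
        = {x : G | g p.1 * x * (g p.1)⁻¹ = g p.2 * x * (g p.2)⁻¹} := by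
      ext x; simp [hp]
    rw [this]
    exact isClosed_eq
      (((continuous_const.mul continuous_id).mul continuous_const))
      (((continuous_const.mul continuous_id).mul continuous_const))
  · have : {x : G | p.1 ≠ p.2 ∧ g p.1 * x * (g p.1)⁻¹ = g p.2 * x * (g p.2)⁻¹}
        = (∅ : Set G) := by
      ext x; simp [hp]
    rw [this]
    exact isClosed_empty

lemma centralizer_coe (x : G) :
    (Subgroup.centralizer ({x} : Set G) : Set G) = {y : G | x * y = y * x} := by
  ext y; simp [Subgroup.mem_centralizer_iff]

lemma isClosed_centralizer (x : G) :
    IsClosed (Subgroup.centralizer ({x} : Set G) : Set G) := by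
  rw [centralizer_coe]
  exact isClosed_eq (continuous_const.mul continuous_id) (continuous_id.mul continuous_const)

end AuxTop

section AuxMeasure
variable {G : Type*} [Group G] [TopologicalSpace G] [IsTopologicalGroup G] [CompactSpace G]
    [T2Space G] [MeasurableSpace G] [BorelSpace G]
    (μ : Measure G) [μ.IsHaarMeasure] [μ.Regular] [IsProbabilityMeasure μ]

open Pointwise in
omit [μ.Regular] [IsProbabilityMeasure μ] in
lemma finite_quotient_of_measure_ne_zero (H : Subgroup G)
    (hm : MeasurableSet (H : Set G)) (h : μ (H : Set G) ≠ 0) : Finite (G ⧸ H) := by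
  have hnhds : (H : Set G) / (H : Set G) ∈ nhds (1 : G) :=
    MeasureTheory.Measure.div_mem_nhds_one_of_haar_pos μ (H : Set G) hm (pos_iff_ne_zero.mpr h)
  have hsub : (H : Set G) / (H : Set G) ⊆ (H : Set G) := by
    intro a ha
    rw [Set.mem_div] at ha
    obtain ⟨b, hb, c, hc, rfl⟩ := ha
    exact div_mem hb hc
  have hopen : IsOpen (H : Set G) :=
    Subgroup.isOpen_of_mem_nhds H (Filter.mem_of_superset hnhds hsub)
  exact H.quotient_finite_of_isOpen hopen

open Pointwise in
lemma card_smul_measure_le (H : Subgroup G) (hm : MeasurableSet (H : Set G))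
    [Finite (G ⧸ H)] :
    Nat.card (G ⧸ H) • μ (H : Set G) ≤ 1 := by
  haveI : Fintype (G ⧸ H) := Fintype.ofFinite _
  have hmk : ∀ (q : G ⧸ H) (a : G), a ∈ (Quotient.out q) • (H : Set G) →
      (QuotientGroup.mk a : G ⧸ H) = q := by
    intro q a ha
    rw [Set.mem_smul_set_iff_inv_smul_mem] at ha
    have : (QuotientGroup.mk (Quotient.out q) : G ⧸ H) = QuotientGroup.mk a :=
      QuotientGroup.eq.mpr ha
    rw [← this, QuotientGroup.out_eq']
  have hdisj : Pairwise (Function.onFun Disjoint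
      fun q : G ⧸ H => (Quotient.out q) • (H : Set G)) := by
    intro q₁ q₂ hne
    rw [Function.onFun, Set.disjoint_left]
    intro a ha1 ha2
    exact hne ((hmk q₁ a ha1).symm.trans (hmk q₂ a ha2))
  have hmeas : ∀ q : G ⧸ H, MeasurableSet ((Quotient.out q) • (H : Set G)) := by
    intro q
    have : (Quotient.out q) • (H : Set G)
        = (fun x => (Quotient.out q)⁻¹ * x) ⁻¹' (H : Set G) := by
      ext a
      rw [Set.mem_smul_set_iff_inv_smul_mem]
      rfl
    rw [this]
    exact (measurable_const_mul _) hm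
  have hconst : ∑' q : G ⧸ H, μ ((Quotient.out q) • (H : Set G))
      = Nat.card (G ⧸ H) • μ (H : Set G) := by
    calc ∑' q : G ⧸ H, μ ((Quotient.out q) • (H : Set G))
        = ∑' _q : G ⧸ H, μ (H : Set G) :=
          tsum_congr fun q => MeasureTheory.measure_smul (μ := μ) (Quotient.out q) (H : Set G)
      _ = Nat.card (G ⧸ H) • μ (H : Set G) := by
          rw [tsum_fintype, Finset.sum_const, Finset.card_univ, Nat.card_eq_fintype_card]
  calc Nat.card (G ⧸ H) • μ (H : Set G)
      = ∑' q : G ⧸ H, μ ((Quotient.out q) • (H : Set G)) := hconst.symm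
    _ = μ (⋃ q : G ⧸ H, (Quotient.out q) • (H : Set G)) :=
        (measure_iUnion hdisj hmeas).symm
    _ ≤ μ Set.univ := measure_mono (Set.subset_univ _)
    _ = 1 := measure_univ

omit [μ.IsHaarMeasure] [IsProbabilityMeasure μ] in
/-- Upper semicontinuity of centralizers plus outer regularity: around a point whose
centralizer is null, there is a neighbourhood all of whose centralizers sit inside a
single small open set. -/
lemma usc_centralizer (x : G) {ε : ℝ≥0∞} (hε : 0 < ε)
    (h0 : μ (Subgroup.centralizer ({x} : Set G) : Set G) = 0) :
    ∃ V U : Set G, IsOpen V ∧ x ∈ V ∧ μ U < ε ∧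
      ∀ x' ∈ V, (Subgroup.centralizer ({x'} : Set G) : Set G) ⊆ U := by
  obtain ⟨U, hCU, hUopen, hUlt⟩ :=
    Set.exists_isOpen_lt_of_lt (Subgroup.centralizer ({x} : Set G) : Set G) ε
      (by rw [h0]; exact hε)
  set K : Set (G × G) := {p : G × G | p.1 * p.2 = p.2 * p.1} ∩ (Set.univ ×ˢ Uᶜ) with hK
  have hKclosed : IsClosed K :=
    (isClosed_eq (continuous_fst.mul continuous_snd)
      (continuous_snd.mul continuous_fst)).inter (isClosed_univ.prod hUopen.isClosed_compl)
  have hproj : IsCompact (Prod.fst '' K) := (hKclosed.isCompact).image continuous_fst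
  refine ⟨(Prod.fst '' K)ᶜ, U, hproj.isClosed.isOpen_compl, ?_, hUlt, ?_⟩
  · intro hx
    obtain ⟨p, hpK, hp1⟩ := hx
    obtain ⟨hpS, -, hpU⟩ := hpK
    apply hpU
    apply hCU
    rw [centralizer_coe]
    show x * p.2 = p.2 * x
    rw [← hp1]
    exact hpS
  · intro x' hx' y hy
    by_contra hyU
    refine hx' ⟨(x', y), ⟨?_, trivial, hyU⟩, rfl⟩
    rw [centralizer_coe] at hy
    exact hy

omit [Group G] [TopologicalSpace G] [IsTopologicalGroup G] [CompactSpace G] [T2Space G]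
    [BorelSpace G] [μ.IsHaarMeasure] [μ.Regular] in
/-- Covering bound: a set of pairs whose first coordinate is covered by finitely many
`V i`, and whose second coordinate lies in the small set `U i` whenever the first lies
in `V i`, has product measure at most `ε` times the measure of the union. -/
lemma cover_prod_bound {ι : Type*} (ε : ℝ≥0∞) (t : Finset ι) (V U : ι → Set G)
    (hV : ∀ i, MeasurableSet (V i)) (hU : ∀ i, μ (U i) ≤ ε) :
    μ.prod μ {p : G × G | p.1 ∈ (⋃ i ∈ t, V i) ∧ ∀ i ∈ t, p.1 ∈ V i → p.2 ∈ U i}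
      ≤ ε * μ (⋃ i ∈ t, V i) := by
  classical
  induction t using Finset.induction_on with
  | empty => simp
  | @insert a t ha ih =>
    set W : Set G := ⋃ i ∈ t, V i with hW
    have hWm : MeasurableSet W := t.measurableSet_biUnion fun i _ => hV i
    have hsub : {p : G × G | p.1 ∈ (⋃ i ∈ insert a t, V i)
          ∧ ∀ i ∈ insert a t, p.1 ∈ V i → p.2 ∈ U i}
        ⊆ ((V a \ W) ×ˢ U a)
          ∪ {p : G × G | p.1 ∈ W ∧ ∀ i ∈ t, p.1 ∈ V i → p.2 ∈ U i} := by
      rintro ⟨x, y⟩ ⟨hx, hy⟩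
      by_cases hxW : x ∈ W
      · exact Or.inr ⟨hxW, fun i hi hxi => hy i (Finset.mem_insert_of_mem hi) hxi⟩
      · left
        have hxa : x ∈ V a := by
          rw [Finset.set_biUnion_insert] at hx
          rcases hx with hx | hx
          · exact hx
          · exact absurd hx hxW
        exact ⟨⟨hxa, hxW⟩, hy a (Finset.mem_insert_self a t) hxa⟩
    calc μ.prod μ {p : G × G | p.1 ∈ (⋃ i ∈ insert a t, V i)
          ∧ ∀ i ∈ insert a t, p.1 ∈ V i → p.2 ∈ U i}
        ≤ μ.prod μ ((V a \ W) ×ˢ U a)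
          + μ.prod μ {p : G × G | p.1 ∈ W ∧ ∀ i ∈ t, p.1 ∈ V i → p.2 ∈ U i} :=
          (measure_mono hsub).trans (measure_union_le _ _)
      _ ≤ μ (V a \ W) * μ (U a) + ε * μ W := by
          rw [Measure.prod_prod]
          exact add_le_add_right ih _
      _ ≤ μ (V a \ W) * ε + ε * μ W := by
          exact add_le_add_left (mul_le_mul_right (hU a) _) _
      _ = ε * (μ (V a \ W) + μ W) := by ring
      _ = ε * μ ((V a \ W) ∪ W) := by rw [measure_union disjoint_sdiff_self_left hWm]
      _ = ε * μ (⋃ i ∈ insert a t, V i) := by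
          rw [Finset.set_biUnion_insert, Set.diff_union_self]

end AuxMeasure

/-- If `cp G > 3/40` then the FC-center has index at most `3` and
contains the derived subgroup. -/
theorem fcCenter_index_le_three_of_cp_gt
    {G : Type*} [Group G] [TopologicalSpace G] [IsTopologicalGroup G] [CompactSpace G]
    [T2Space G] [MeasurableSpace G] [BorelSpace G]
    (μ : Measure G) [μ.IsHaarMeasure] [μ.Regular] [IsProbabilityMeasure μ]
    (h : (3 / 40 : ℝ) < ((μ.prod μ) {p : G × G | p.1 * p.2 = p.2 * p.1}).toReal) :
    (fcCenter G).FiniteIndex ∧ (fcCenter G).index ≤ 3 ∧ commutator G ≤ fcCenter G := by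
  set S : Set (G × G) := {p : G × G | p.1 * p.2 = p.2 * p.1} with hSdef
  set F : Set G := (fcCenter G : Set G) with hFdef
  -- measurability of F
  have hFm : MeasurableSet F := by
    have hFeq : F = ⋃ n, FnSet G n := by
      ext x
      simp only [hFdef, SetLike.mem_coe, Set.mem_iUnion]
      exact mem_fcCenter_iff_exists_fnSet x
    rw [hFeq]
    exact MeasurableSet.iUnion fun n => (isClosed_fnSet G n).measurableSet
  -- membership from positive centralizer measure
  have hmemF : ∀ x : G, μ (Subgroup.centralizer ({x} : Set G) : Set G) ≠ 0 →
      x ∈ fcCenter G := by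
    intro x h0
    haveI := finite_quotient_of_measure_ne_zero μ _ (isClosed_centralizer x).measurableSet h0
    exact (mem_fcCenter_iff_finite_quotient x).mpr inferInstance
  have hCnull : ∀ x : G, x ∉ fcCenter G →
      μ (Subgroup.centralizer ({x} : Set G) : Set G) = 0 := by
    intro x hx
    by_contra hne
    exact hx (hmemF x hne)
  -- Claim A
  have hA : μ.prod μ (S ∩ (Fᶜ ×ˢ Set.univ)) = 0 := by
    refine le_antisymm ?_ (zero_le)
    refine ENNReal.le_of_forall_pos_le_add fun ε hε _ => ?_
    rw [zero_add]
    have hε2 : (ε : ℝ≥0∞) / 2 ≠ 0 :=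
      (ENNReal.div_pos (by exact_mod_cast hε.ne') (by norm_num)).ne'
    obtain ⟨K, hKF, hKcomp, hKlt⟩ :=
      (hFm.compl).exists_isCompact_lt_add (measure_ne_top μ _) hε2
    have hdiff : μ (Fᶜ \ K) ≤ (ε : ℝ≥0∞) / 2 := by
      rw [measure_diff hKF hKcomp.isClosed.measurableSet.nullMeasurableSet (measure_ne_top μ K)]
      exact tsub_le_iff_left.mpr hKlt.le
    have hch : ∀ k : K, ∃ V U : Set G, IsOpen V ∧ (k : G) ∈ V ∧ μ U < (ε : ℝ≥0∞) / 2 ∧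
        ∀ x' ∈ V, (Subgroup.centralizer ({x'} : Set G) : Set G) ⊆ U := by
      intro k
      exact usc_centralizer μ (k : G) (pos_iff_ne_zero.mpr hε2) (hCnull _ (hKF k.2))
    choose V U hVopen hVmem hUlt hUsub using hch
    obtain ⟨t, ht⟩ := hKcomp.elim_finite_subcover V hVopen
      (fun x hx => Set.mem_iUnion.mpr ⟨⟨x, hx⟩, hVmem _⟩)
    have hsub : S ∩ (Fᶜ ×ˢ Set.univ) ⊆
        {p : G × G | p.1 ∈ (⋃ i ∈ t, V i) ∧ ∀ i ∈ t, p.1 ∈ V i → p.2 ∈ U i}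
          ∪ ((Fᶜ \ K) ×ˢ Set.univ) := by
      rintro ⟨x, y⟩ ⟨hxyS, hxF, -⟩
      by_cases hxK : x ∈ K
      · left
        refine ⟨ht hxK, fun i hi hxV => hUsub i x hxV ?_⟩
        rw [centralizer_coe]
        exact hxyS
      · exact Or.inr ⟨⟨hxF, hxK⟩, trivial⟩
    calc μ.prod μ (S ∩ (Fᶜ ×ˢ Set.univ))
        ≤ μ.prod μ {p : G × G | p.1 ∈ (⋃ i ∈ t, V i) ∧ ∀ i ∈ t, p.1 ∈ V i → p.2 ∈ U i}
          + μ.prod μ ((Fᶜ \ K) ×ˢ Set.univ) :=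
          (measure_mono hsub).trans (measure_union_le _ _)
      _ ≤ (ε : ℝ≥0∞) / 2 * μ (⋃ i ∈ t, V i) + μ (Fᶜ \ K) * μ (Set.univ : Set G) := by
          rw [Measure.prod_prod]
          exact add_le_add_left (cover_prod_bound μ _ t V U
            (fun i => (hVopen i).measurableSet) (fun i => (hUlt i).le)) _
      _ ≤ (ε : ℝ≥0∞) / 2 * 1 + (ε : ℝ≥0∞) / 2 * 1 :=
          add_le_add (mul_le_mul_right prob_le_one _) (mul_le_mul' hdiff prob_le_one)
      _ = (ε : ℝ≥0∞) := by rw [mul_one]; exact ENNReal.add_halves _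
  -- Claim B by symmetry
  have hB : μ.prod μ (S ∩ (Set.univ ×ˢ Fᶜ)) = 0 := by
    have hmap : (μ.prod μ).map (MeasurableEquiv.prodComm : G × G ≃ᵐ G × G) = μ.prod μ :=
      Measure.prod_swap
    have happ := MeasurableEquiv.map_apply (MeasurableEquiv.prodComm : G × G ≃ᵐ G × G)
      (μ := μ.prod μ) (S ∩ (Set.univ ×ˢ Fᶜ))
    rw [hmap] at happ
    have hswap : (MeasurableEquiv.prodComm : G × G ≃ᵐ G × G) ⁻¹' (S ∩ (Set.univ ×ˢ Fᶜ))
        = S ∩ (Fᶜ ×ˢ Set.univ) := by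
      ext ⟨x, y⟩
      constructor
      · rintro ⟨hS, -, hF⟩
        exact ⟨(show y * x = x * y from hS).symm, hF, trivial⟩
      · rintro ⟨hS, hF, -⟩
        exact ⟨(show x * y = y * x from hS).symm, trivial, hF⟩
    rw [hswap] at happ
    rw [happ, hA]
  -- main bound
  have hcover : S ⊆ (F ×ˢ F) ∪ ((S ∩ (Fᶜ ×ˢ Set.univ)) ∪ (S ∩ (Set.univ ×ˢ Fᶜ))) := by
    rintro ⟨x, y⟩ hxy
    by_cases hx : x ∈ F
    · by_cases hy : y ∈ F
      · exact Or.inl ⟨hx, hy⟩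
      · exact Or.inr (Or.inr ⟨hxy, trivial, hy⟩)
    · exact Or.inr (Or.inl ⟨hxy, hx, trivial⟩)
  have hmain : μ.prod μ S ≤ μ F * μ F := by
    calc μ.prod μ S
        ≤ μ.prod μ (F ×ˢ F) + μ.prod μ ((S ∩ (Fᶜ ×ˢ Set.univ)) ∪ (S ∩ (Set.univ ×ˢ Fᶜ))) :=
          (measure_mono hcover).trans (measure_union_le _ _)
      _ ≤ μ.prod μ (F ×ˢ F) + (μ.prod μ (S ∩ (Fᶜ ×ˢ Set.univ))
            + μ.prod μ (S ∩ (Set.univ ×ˢ Fᶜ))) := by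
          gcongr
          exact measure_union_le _ _
      _ = μ F * μ F := by rw [hA, hB, Measure.prod_prod, add_zero, add_zero]
  have hμF : μ F ≠ 0 := by
    intro h0
    have hS0 : μ.prod μ S = 0 := le_antisymm (by simpa [h0] using hmain) (zero_le)
    rw [hS0] at h
    norm_num at h
  haveI hfin : Finite (G ⧸ fcCenter G) := finite_quotient_of_measure_ne_zero μ _ hFm hμF
  haveI hFI : (fcCenter G).FiniteIndex := Subgroup.finiteIndex_of_finite_quotient
  have hidx : (fcCenter G).index ≤ 3 := by
    by_contra hgt
    push_neg at hgt
    have h4 : 4 ≤ Nat.card (G ⧸ fcCenter G) := by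
      rw [← Subgroup.index_eq_card]; omega
    have hle : Nat.card (G ⧸ fcCenter G) • μ F ≤ 1 := card_smul_measure_le μ (fcCenter G) hFm
    have h4le : (4 : ℝ≥0∞) * μ F ≤ 1 := by
      calc (4 : ℝ≥0∞) * μ F ≤ (Nat.card (G ⧸ fcCenter G) : ℝ≥0∞) * μ F := by
            gcongr
            exact_mod_cast h4
        _ = Nat.card (G ⧸ fcCenter G) • μ F := by rw [nsmul_eq_mul]
        _ ≤ 1 := hle
    have hF4 : μ F ≤ 1 / 4 :=
      (ENNReal.le_div_iff_mul_le (Or.inl (by norm_num)) (Or.inl (by norm_num))).mpr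
        (by rwa [mul_comm] at h4le)
    have hS16 : μ.prod μ S ≤ 1 / 16 := by
      calc μ.prod μ S ≤ μ F * μ F := hmain
        _ ≤ (1 / 4) * (1 / 4) := mul_le_mul' hF4 hF4
        _ = 1 / 16 := by
            rw [show (16 : ℝ≥0∞) = 4 * 4 by norm_num, one_div, one_div]
            exact (ENNReal.mul_inv (Or.inl (by norm_num)) (Or.inl (by norm_num))).symm
    have htr : ((μ.prod μ) S).toReal ≤ 1 / 16 := by
      have := ENNReal.toReal_mono (by norm_num : (1 / 16 : ℝ≥0∞) ≠ ⊤) hS16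
      rwa [show ((1 / 16 : ℝ≥0∞)).toReal = 1 / 16 by norm_num] at this
    linarith
  refine ⟨hFI, hidx, ?_⟩
  have hcomm : ∀ a b : G ⧸ fcCenter G, a * b = b * a := by
    have hcard3 : Nat.card (G ⧸ fcCenter G) ≤ 3 := by
      rw [← Subgroup.index_eq_card]; exact hidx
    have hcard1 : 1 ≤ Nat.card (G ⧸ fcCenter G) := Nat.card_pos
    interval_cases hn : Nat.card (G ⧸ fcCenter G)
    · haveI : Subsingleton (G ⧸ fcCenter G) := Nat.card_eq_one_iff_unique.mp hn |>.1
      intro a b; exact Subsingleton.elim _ _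
    · haveI : Fact (Nat.Prime 2) := ⟨Nat.prime_two⟩
      haveI : IsCyclic (G ⧸ fcCenter G) := isCyclic_of_prime_card hn
      letI : CommGroup (G ⧸ fcCenter G) := IsCyclic.commGroup
      intro a b; exact mul_comm a b
    · haveI : Fact (Nat.Prime 3) := ⟨Nat.prime_three⟩
      haveI : IsCyclic (G ⧸ fcCenter G) := isCyclic_of_prime_card hn
      letI : CommGroup (G ⧸ fcCenter G) := IsCyclic.commGroup
      intro a b; exact mul_comm a b
  rw [_root_.commutator_def, Subgroup.commutator_le]
  intro g₁ _ g₂ _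
  have hmk : ((⁅g₁, g₂⁆ : G) : G ⧸ fcCenter G) = 1 := by
    rw [show ((⁅g₁, g₂⁆ : G) : G ⧸ fcCenter G)
        = ⁅(g₁ : G ⧸ fcCenter G), (g₂ : G ⧸ fcCenter G)⁆ from
      map_commutatorElement (QuotientGroup.mk' (fcCenter G)) g₁ g₂]
    exact commutatorElement_eq_one_iff_mul_comm.mpr (hcomm _ _)
  exact (QuotientGroup.eq_one_iff _).mp hmk
end
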